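/- Let m ≥ 3 be an integer and set c_m = 4(m-1)/(m-2). Define y(t) = t(t^{4/(m-2)} - 1)/(c_m (t-1)). Then for every t ∈ (0,1), y(t) < 1/(m-1). -/

import Mathlib

/-- For an integer `m ≥ 3` and `c_m = 4(m-1)/(m-2)`, the function
`y(t) = t (t^{4/(m-2)} - 1) / (c_m (t-1))` satisfies `y(t) < 1/(m-1)` for all
`t ∈ (0,1)`. -/
theorem stmt_1 (m : ℕ) (hm : 3 ≤ m) :
    ∀ t ∈ Set.Ioo (0 : ℝ) 1,
      t * (t ^ ((4 : ℝ) / ((m : ℝ) - 2)) - 1) /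
        ((4 * ((m : ℝ) - 1) / ((m : ℝ) - 2)) * (t - 1)) < 1 / ((m : ℝ) - 1) := by
  intro t ht
  obtain ⟨ht0, ht1⟩ := ht
  set M : ℝ := (m : ℝ) with hM
  have hM3 : (3:ℝ) ≤ M := by rw [hM]; exact_mod_cast hm
  have hM2 : (0:ℝ) < M - 2 := by linarith
  have hM1 : (0:ℝ) < M - 1 := by linarith
  set a : ℝ := 4 / (M - 2) with ha
  have ha0 : 0 < a := by positivity
  have hden : (4 * (M - 1) / (M - 2)) * (t - 1) < 0 :=
    mul_neg_of_pos_of_neg (by positivity) (by linarith)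
  rw [div_lt_iff_of_neg hden]
  have hb : 1 + (1 + a) * (t - 1) < (1 + (t - 1)) ^ (1 + a) :=
    one_add_mul_self_lt_rpow_one_add (by linarith) (by linarith) (by linarith)
  have hpow : (1 + (t - 1)) ^ (1 + a) = t * t ^ a := by
    rw [show (1:ℝ) + (t - 1) = t by ring, Real.rpow_add ht0, Real.rpow_one]
  rw [hpow] at hb
  have h4 : 1 / (M - 1) * (4 * (M - 1) / (M - 2) * (t - 1)) = a * (t - 1) := by
    rw [ha]
    field_simp [ha]
  rw [h4]
  nlinarith [hb]
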